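/- Let A be a ℂ-algebra with involution, R a real closed extension field of ℝ, and C = R[i]. If φ : A → C is a completely positive ℂ-linear functional with φ(a*) = conj(φ(a)) for all a ∈ A, then φ satisfies the Cauchy–Schwarz inequality: |φ(a*b)|² ≤ φ(a*a)·φ(b*b) in R for all a, b ∈ A. -/

import Mathlib

open Polynomial Matrix

/-- A linearly ordered field is *real closed* if every nonnegative element is a square and
every polynomial of odd degree has a root. -/
def IsRealClosed' (R : Type*) [Field R] [LinearOrder R] [IsStrictOrderedRing R] : Prop :=
  (∀ x : R, 0 ≤ x → ∃ y : R, y ^ 2 = x) ∧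
    ∀ p : Polynomial R, Odd p.natDegree → ∃ x : R, p.IsRoot x

noncomputable section

set_option maxRecDepth 8000

/-- `Cplx R = R[i] = R[X]/(X² + 1)`. -/
abbrev Cplx (R : Type*) [CommRing R] : Type _ := AdjoinRoot (X ^ 2 + 1 : R[X])

namespace Cplx

variable (R : Type*) [CommRing R]

/-- The imaginary unit `i` of `R[i]`. -/
def I : Cplx R := AdjoinRoot.root _

theorem I_sq : (I R) ^ 2 = -1 := by
  have h : (I R) ^ 2 + 1 = 0 := by
    have h := AdjoinRoot.eval₂_root (X ^ 2 + 1 : R[X])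
    simpa only [I, eval₂_add, eval₂_pow, eval₂_X, eval₂_one] using h
  exact eq_neg_of_add_eq_zero_left h

variable {R}

/-- Conjugation on `R[i]`: the `R`-algebra involution determined by `i ↦ -i`. -/
def conj : Cplx R →+* Cplx R :=
  AdjoinRoot.lift (algebraMap R _) (-(I R)) (by
    have h : (I R) ^ 2 + 1 = 0 := by
      have h := AdjoinRoot.eval₂_root (X ^ 2 + 1 : R[X])
      simpa only [I, eval₂_add, eval₂_pow, eval₂_X, eval₂_one] using h
    simp only [eval₂_add, eval₂_pow, eval₂_X, eval₂_one]
    calc (-(I R)) ^ 2 + 1 = (I R) ^ 2 + 1 := by ring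
    _ = 0 := h)

/-- `z ∈ R[i]` is *nonnegative* if it lies in `R` and is nonnegative there. -/
def nonneg {R' : Type*} [Field R'] [LinearOrder R'] [IsStrictOrderedRing R'] (z : Cplx R') : Prop :=
  ∃ r : R', 0 ≤ r ∧ z = algebraMap R' (Cplx R') r

/-- `z ∈ R[i]` is *positive* if it lies in `R` and is positive there. -/
def pos {R' : Type*} [Field R'] [LinearOrder R'] [IsStrictOrderedRing R'] (z : Cplx R') : Prop :=
  ∃ r : R', 0 < r ∧ z = algebraMap R' (Cplx R') r

/-- The embedding `ℂ = ℝ[i] → R[i]` induced by an embedding `f : ℝ → R`,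
`x + y·i ↦ f x + f y · i`. -/
def emb (f : ℝ →+* R) : ℂ →+* Cplx R where
  toFun z := algebraMap R (Cplx R) (f z.re) + algebraMap R (Cplx R) (f z.im) * I R
  map_one' := by simp
  map_zero' := by simp
  map_add' z w := by
    simp only [Complex.add_re, Complex.add_im, map_add]
    ring
  map_mul' z w := by
    have hI : (I R) ^ 2 = -1 := I_sq R
    simp only [Complex.mul_re, Complex.mul_im, map_add, map_sub, _root_.map_mul]
    linear_combination (-(algebraMap R (Cplx R) (f z.im) * algebraMap R (Cplx R) (f w.im))) * hI

/-- A matrix with entries in `R[i]` is positive semidefinite if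
`∑ⱼₖ conj(zⱼ)·zₖ·Mⱼₖ ≥ 0` for all vectors `z`. -/
def PSD {R' : Type*} [Field R'] [LinearOrder R'] [IsStrictOrderedRing R'] {m : ℕ}
    (M : Matrix (Fin m) (Fin m) (Cplx R')) : Prop :=
  ∀ z : Fin m → Cplx R', Cplx.nonneg (∑ j, ∑ k, Cplx.conj (z j) * z k * M j k)

end Cplx

section StarAlgebra

variable {R : Type*} [Field R] [LinearOrder R] [IsStrictOrderedRing R]
variable {A : Type*} [NonUnitalRing A] [Module ℂ A] [StarRing A] [StarModule ℂ A]

/-- `φ : A → R[i]` is `ℂ`-linear (via the embedding `ℂ → R[i]` induced by `f`) and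
compatible with the involutions: `φ(a*) = conj (φ a)`. -/
def IsHermitianLinear (f : ℝ →+* R) (φ : A → Cplx R) : Prop :=
  (∀ a b : A, φ (a + b) = φ a + φ b) ∧
  (∀ (c : ℂ) (a : A), φ (c • a) = Cplx.emb f c * φ a) ∧
  (∀ a : A, φ (star a) = Cplx.conj (φ a))

/-- `φ : A → R[i]` is *completely positive* if for every `m` the entrywise map
`Mₘ(A) → Mₘ(R[i])` maps sums of hermitian squares to positive semidefinite matrices. -/
def CompletelyPositive (φ : A → Cplx R) : Prop :=
  ∀ (m n : ℕ) (B : Fin n → Matrix (Fin m) (Fin m) A),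
    Cplx.PSD (fun j k => φ ((∑ l, (B l)ᴴ * B l) j k))

/-- The set of sums of hermitian squares in a `*`-algebra. -/
def SumsOfSquares (A : Type*) [NonUnitalRing A] [Star A] : Set A :=
  {x | ∃ (n : ℕ) (a : Fin n → A), x = ∑ i, star (a i) * a i}

end StarAlgebra

universe u v

namespace CSAux

variable {R : Type*} [Field R] [LinearOrder R] [IsStrictOrderedRing R]

local notation "Φ" => algebraMap R (Cplx R)

lemma monic2 : (X ^ 2 + 1 : R[X]).Monic := by
  simpa using monic_X_pow_add_C (R := R) (1 : R) (two_ne_zero)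

lemma deg2 : degree (X ^ 2 + 1 : R[X]) = 2 := by
  simpa using degree_X_pow_add_C (R := R) (n := 2) (by norm_num) (1 : R)

lemma repr (z : Cplx R) : ∃ x y : R, z = Φ x + Φ y * Cplx.I R := by
  obtain ⟨q, rfl⟩ := AdjoinRoot.mk_surjective z
  refine ⟨(q %ₘ (X ^ 2 + 1)).coeff 0, (q %ₘ (X ^ 2 + 1)).coeff 1, ?_⟩
  have h1 : AdjoinRoot.mk (X ^ 2 + 1 : R[X]) q = AdjoinRoot.mk _ (q %ₘ (X ^ 2 + 1)) := by
    rw [AdjoinRoot.mk_eq_mk, modByMonic_eq_sub_mul_div q (X ^ 2 + 1), sub_sub_cancel]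
    exact dvd_mul_right _ _
  have hdeg : degree (q %ₘ (X ^ 2 + 1)) ≤ 1 := by
    have := degree_modByMonic_lt q (monic2 (R := R))
    rw [deg2] at this
    exact Order.le_of_lt_succ this
  have h2 := eq_X_add_C_of_degree_le_one hdeg
  rw [h1]
  conv_lhs => rw [h2]
  simp only [_root_.map_add, _root_.map_mul, AdjoinRoot.mk_C, AdjoinRoot.mk_X,
    AdjoinRoot.algebraMap_eq, Cplx.I]
  ring

lemma inj0 {x y : R} (h : Φ x + Φ y * Cplx.I R = 0) : x = 0 ∧ y = 0 := by
  have hm : AdjoinRoot.mk (X ^ 2 + 1 : R[X]) (C y * X + C x) = 0 := by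
    rw [← h]
    simp only [_root_.map_add, _root_.map_mul, AdjoinRoot.mk_C, AdjoinRoot.mk_X,
      AdjoinRoot.algebraMap_eq, Cplx.I]
    ring
  have hpoly : (C y * X + C x : R[X]) = 0 := by
    by_contra h0
    exact AdjoinRoot.mk_ne_zero_of_degree_lt monic2 h0
      (lt_of_le_of_lt degree_linear_le (by rw [deg2]; norm_num)) hm
  constructor
  · have := congrArg (fun p => Polynomial.coeff p 0) hpoly; simpa using this
  · have := congrArg (fun p => Polynomial.coeff p 1) hpoly; simpa using this

lemma Φ_inj {s t : R} (h : Φ s = Φ t) : s = t := by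
  have h' : Φ (s - t) + Φ 0 * Cplx.I R = 0 := by
    rw [map_sub, _root_.map_zero, zero_mul, add_zero, sub_eq_zero]; exact h
  have := (inj0 h').1
  linarith [sub_eq_zero.mp this]

lemma nonneg_iff {s : R} : Cplx.nonneg (Φ s) ↔ 0 ≤ s := by
  constructor
  · rintro ⟨r, hr, he⟩
    rwa [Φ_inj he]
  · intro hs; exact ⟨s, hs, rfl⟩

lemma conj_algebraMap (x : R) : Cplx.conj (Φ x) = Φ x := by
  simp only [Cplx.conj, AdjoinRoot.algebraMap_eq]
  rw [AdjoinRoot.lift_of]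

lemma conj_of (x : R) : Cplx.conj (AdjoinRoot.of (X ^ 2 + 1 : R[X]) x)
    = AdjoinRoot.of (X ^ 2 + 1 : R[X]) x := by
  have := conj_algebraMap (R := R) x
  rwa [AdjoinRoot.algebraMap_eq] at this

lemma conj_I : Cplx.conj (Cplx.I R) = -(Cplx.I R) := AdjoinRoot.lift_root _

lemma conj_conj (z : Cplx R) : Cplx.conj (Cplx.conj z) = z := by
  obtain ⟨x, y, rfl⟩ := repr z
  simp only [_root_.map_add, _root_.map_mul, conj_algebraMap, conj_I, conj_of,
    _root_.map_neg, neg_neg]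

lemma key (p q r : Cplx R)
    (h : ∀ z1 z2 : Cplx R, Cplx.nonneg (Cplx.conj z1 * z1 * p + Cplx.conj z1 * z2 * q
      + Cplx.conj z2 * z1 * Cplx.conj q + Cplx.conj z2 * z2 * r)) :
    Cplx.nonneg (p * r - q * Cplx.conj q) := by
  have hp0 := h 1 0
  simp only [_root_.map_one, _root_.map_zero, one_mul, mul_one, zero_mul, mul_zero,
    add_zero, zero_add] at hp0
  obtain ⟨p', hp'0, hpE⟩ := hp0
  have hr0 := h 0 1
  simp only [_root_.map_one, _root_.map_zero, one_mul, mul_one, zero_mul, mul_zero,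
    add_zero, zero_add] at hr0
  obtain ⟨r', hr'0, hrE⟩ := hr0
  obtain ⟨x, y, hq⟩ := repr q
  set n : R := x ^ 2 + y ^ 2 with hn
  have hcq : Cplx.conj q = Φ x - Φ y * Cplx.I R := by
    rw [hq]
    simp only [_root_.map_add, _root_.map_mul, conj_algebraMap, conj_I]
    ring
  have hqq : q * Cplx.conj q = Φ n := by
    rw [hcq, hq, hn]
    simp only [_root_.map_add, map_pow]
    linear_combination (-(Φ y * Φ y)) * Cplx.I_sq R
  have hn0 : 0 ≤ n := by positivity
  have hmain : ∀ t : R, 0 ≤ t ^ 2 * p' - 2 * t * n + n * r' := by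
    intro t
    have ht := h (Φ t) (-(Cplx.conj q))
    rw [_root_.map_neg, conj_conj, conj_algebraMap] at ht
    have heq : Φ t * Φ t * p + Φ t * -Cplx.conj q * q + -q * Φ t * Cplx.conj q
        + -q * -Cplx.conj q * r = Φ (t ^ 2 * p' - 2 * t * n + n * r') := by
      rw [hpE, hrE]
      simp only [map_sub, _root_.map_add, _root_.map_mul, map_pow, map_ofNat]
      linear_combination (Φ r' - 2 * Φ t) * hqq
    rw [heq, nonneg_iff] at ht
    exact ht
  have hgoal : p * r - q * Cplx.conj q = Φ (p' * r' - n) := by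
    rw [hpE, hrE, hqq]
    simp only [map_sub, _root_.map_mul]
  rw [hgoal, nonneg_iff]
  rcases eq_or_lt_of_le hr'0 with hr'z | hr'pos
  · have hnz : n = 0 := by
      by_contra h0
      have hnpos : 0 < n := lt_of_le_of_ne hn0 (Ne.symm h0)
      have hp1 : 0 < p' + 1 := by linarith
      have ht := hmain (n / (p' + 1))
      rw [← hr'z] at ht
      have htt : 0 < n / (p' + 1) := div_pos hnpos hp1
      have hdiv : n / (p' + 1) * (p' + 1) = n := div_mul_cancel₀ n (ne_of_gt hp1)
      nlinarith [htt, ht, hdiv, hnpos]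
    rw [hnz, ← hr'z]
    simp
  · have h1 : 0 ≤ r' * (r' * p' - n) := by nlinarith [hmain r']
    nlinarith [h1, hr'pos]

end CSAux


/-- **Cauchy–Schwarz inequality for completely positive functionals.**
Let `A` be a `ℂ`-algebra with involution, `R` a real closed extension field of `ℝ` and
`C = R[i]`.  If `φ : A → C` is a completely positive `ℂ`-linear functional with
`φ(a*) = conj (φ a)`, then `|φ(a*b)|² ≤ φ(a*a)·φ(b*b)` in `R`, i.e.
`φ(a*a)·φ(b*b) - φ(a*b)·conj(φ(a*b)) ≥ 0`. -/
theorem completelyPositive_cauchy_schwarz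
    {R : Type u} [Field R] [LinearOrder R] [IsStrictOrderedRing R] (f : ℝ →+*o R) (hR : IsRealClosed' R)
    {A : Type v} [NonUnitalRing A] [Module ℂ A] [SMulCommClass ℂ A A] [IsScalarTower ℂ A A]
    [StarRing A] [StarModule ℂ A]
    (φ : A → Cplx R) (hφ : IsHermitianLinear f.toRingHom φ)
    (hcp : CompletelyPositive φ) (a b : A) :
    Cplx.nonneg (φ (star a * a) * φ (star b * b)
      - φ (star a * b) * Cplx.conj (φ (star a * b))) := by
  
  have hmat : (∑ l : Fin 1, ((fun _ : Fin 1 => (!![a, b; 0, 0] : Matrix (Fin 2) (Fin 2) A)) l)ᴴ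
      * (fun _ : Fin 1 => (!![a, b; 0, 0] : Matrix (Fin 2) (Fin 2) A)) l)
      = !![star a * a, star a * b; star b * a, star b * b] := by
    ext j k
    fin_cases j <;> fin_cases k <;>
      simp [Matrix.mul_apply, Fin.sum_univ_two, Matrix.conjTranspose_apply]
  have h2 := hcp 2 1 (fun _ : Fin 1 => (!![a, b; 0, 0] : Matrix (Fin 2) (Fin 2) A))
  rw [hmat] at h2
  refine CSAux.key _ _ _ (fun z1 z2 => ?_)
  have h3 := h2 ![z1, z2]
  simp only [Fin.sum_univ_two, Matrix.of_apply, Matrix.cons_val', Matrix.cons_val_zero,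
    Matrix.cons_val_one, Matrix.head_cons, Matrix.empty_val', Matrix.cons_val_fin_one,
    Matrix.head_fin_const] at h3
  have hba : φ (star b * a) = Cplx.conj (φ (star a * b)) := by
    rw [← hφ.2.2]
    congr 1
    simp
  rw [hba] at h3
  convert h3 using 1
  ring
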